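/- Let h ≠ 0 and α ∈ ℝ, and let x, y : ℕ → ℝ be sequences such that for every k: (x(k+2) − 2x(k+1) + x(k))/h² + α·(y(k+2) − y(k))/(2h) = 0 and (y(k+2) − 2y(k+1) + y(k))/h² − α·(x(k+2) − x(k))/(2h) = 0. Define u(k) = (x(k+1) − x(k))/h and v(k) = (y(k+1) − y(k))/h. Then for every k, [u(k+1), v(k+1)]ᵀ = A·[u(k), v(k)]ᵀ, where A = (1/(4 + α²h²))·[[4 − α²h², −4αh], [4αh, 4 − α²h²]]. -/

import Mathlib

open Matrix

/-- For sequences satisfying the simplified discrete nonholonomic equations of the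
rolling ball on a rotating table, the discrete velocities `(u_k, v_k)` evolve by
multiplication by the rotation matrix `A`. -/
theorem stmt_15 (h α : ℝ) (hh : h ≠ 0) (x y : ℕ → ℝ)
    (hx : ∀ k : ℕ,
      (x (k + 2) - 2 * x (k + 1) + x k) / h ^ 2 + α * (y (k + 2) - y k) / (2 * h) = 0)
    (hy : ∀ k : ℕ,
      (y (k + 2) - 2 * y (k + 1) + y k) / h ^ 2 - α * (x (k + 2) - x k) / (2 * h) = 0)
    (u v : ℕ → ℝ)
    (hu : ∀ k : ℕ, u k = (x (k + 1) - x k) / h)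
    (hv : ∀ k : ℕ, v k = (y (k + 1) - y k) / h) :
    ∀ k : ℕ,
      ![u (k + 1), v (k + 1)] =
        ((1 / (4 + α ^ 2 * h ^ 2)) •
            !![4 - α ^ 2 * h ^ 2, -(4 * α * h); 4 * α * h, 4 - α ^ 2 * h ^ 2] :
          Matrix (Fin 2) (Fin 2) ℝ).mulVec ![u k, v k] := by
  intro k
  have hd : (4 + α ^ 2 * h ^ 2) ≠ 0 := by positivity
  have E1 := hx k
  have E2 := hy k
  field_simp at E1 E2
  funext i
  fin_cases i
  · simp only [mulVec, dotProduct, Fin.sum_univ_two, hu, hv, Matrix.smul_apply, of_apply,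
      cons_val', cons_val_zero, cons_val_one, head_cons, head_fin_const, empty_val',
      cons_val_fin_one, smul_eq_mul, Fin.zero_eta, Fin.mk_one]
    field_simp
    linear_combination 2 * E1 - α * h * E2
  · simp only [mulVec, dotProduct, Fin.sum_univ_two, hu, hv, Matrix.smul_apply, of_apply,
      cons_val', cons_val_zero, cons_val_one, head_cons, head_fin_const, empty_val',
      cons_val_fin_one, smul_eq_mul, Fin.zero_eta, Fin.mk_one]
    field_simp
    linear_combination 2 * E2 + α * h * E1
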